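/- Let S be a nonempty finite type and let P, P' be row-stochastic matrices on S. Suppose P is γ-contractive for some γ ∈ [0,1), and let d be a stationary distribution of P and d' a stationary distribution of P'. Then ‖d − d'‖₁ ≤ ‖P − P'‖_∞ / (1 − γ), where ‖P − P'‖_∞ = max_s ∑_{s'} |P(s,s') − P'(s,s')|. -/
import Mathlib


/-- A probability vector on a finite type: nonnegative entries summing to 1. -/
def IsProbVec {S : Type*} [Fintype S] (d : S → ℝ) : Prop :=
  (∀ s, 0 ≤ d s) ∧ ∑ s, d s = 1

/-- A row-stochastic matrix: every row is a probability vector. -/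
def RowStochastic {S : Type*} [Fintype S] (P : S → S → ℝ) : Prop :=
  ∀ s, IsProbVec (P s)

/-- Row-vector–matrix multiplication: (d ⬝ P) s' = ∑ s, d s · P s s'. -/
def vmul {S : Type*} [Fintype S] (d : S → ℝ) (P : S → S → ℝ) : S → ℝ :=
  fun s' => ∑ s, d s * P s s'

/-- L1 norm of a vector: ‖x‖₁ = ∑ s, |x s|. -/
def l1 {S : Type*} [Fintype S] (x : S → ℝ) : ℝ := ∑ s, |x s|

/-- Maximum of a real-valued function over a nonempty finite type. -/
noncomputable def fmax {S : Type*} [Fintype S] [Nonempty S] (f : S → ℝ) : ℝ :=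
  Finset.univ.sup' Finset.univ_nonempty f

/-- Kernel distance ‖K − K'‖_∞ = max_s ∑_{s'} |K(s,s') − K'(s,s')|. -/
noncomputable def kdist {S : Type*} [Fintype S] [Nonempty S] (K K' : S → S → ℝ) : ℝ :=
  fmax (fun s => ∑ s', |K s s' - K' s s'|)

/-- γ-contractivity: ‖d ⬝ P − d' ⬝ P‖₁ ≤ γ · ‖d − d'‖₁ for all probability vectors d, d'. -/
def Contractive {S : Type*} [Fintype S] (γ : ℝ) (P : S → S → ℝ) : Prop :=
  ∀ d d' : S → ℝ, IsProbVec d → IsProbVec d' →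
    l1 (fun s => vmul d P s - vmul d' P s) ≤ γ * l1 (fun s => d s - d' s)

/-- stationary distributions of nearby kernels are close,
  ‖d − d'‖₁ ≤ ‖P − P'‖_∞ / (1 − γ). -/
theorem stmt_4 {S : Type*} [Fintype S] [Nonempty S] (P P' : S → S → ℝ) (γ : ℝ)
    (hγ0 : 0 ≤ γ) (hγ1 : γ < 1)
    (hP : RowStochastic P) (hP' : RowStochastic P') (hc : Contractive γ P)
    (d d' : S → ℝ) (hd : IsProbVec d) (hd' : IsProbVec d')
    (hstat : vmul d P = d) (hstat' : vmul d' P' = d') :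
    l1 (fun s => d s - d' s) ≤ kdist P P' / (1 - γ) := by
  have hkey : l1 (fun s => vmul d' P s - vmul d' P' s) ≤ kdist P P' := by
    unfold l1 vmul kdist fmax
    calc ∑ s', |∑ s, d' s * P s s' - ∑ s, d' s * P' s s'|
        ≤ ∑ s', ∑ s, d' s * |P s s' - P' s s'| := by
          apply Finset.sum_le_sum
          intro s' _
          rw [← Finset.sum_sub_distrib]
          refine (Finset.abs_sum_le_sum_abs _ _).trans ?_
          apply Finset.sum_le_sum
          intro s _
          rw [← mul_sub, abs_mul, abs_of_nonneg (hd'.1 s)]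
      _ = ∑ s, d' s * ∑ s', |P s s' - P' s s'| := by
          rw [Finset.sum_comm]
          simp [Finset.mul_sum]
      _ ≤ ∑ s, d' s * (Finset.univ.sup' Finset.univ_nonempty
            fun s => ∑ s', |P s s' - P' s s'|) := by
          apply Finset.sum_le_sum
          intro s _
          exact mul_le_mul_of_nonneg_left
            (Finset.le_sup' (fun s => ∑ s', |P s s' - P' s s'|) (Finset.mem_univ s)) (hd'.1 s)
      _ = _ := by rw [← Finset.sum_mul, hd'.2, one_mul]
  have hmain : l1 (fun s => d s - d' s) ≤ γ * l1 (fun s => d s - d' s) + kdist P P' := by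
    have h1 : l1 (fun s => d s - d' s)
        ≤ l1 (fun s => vmul d P s - vmul d' P s) + l1 (fun s => vmul d' P s - vmul d' P' s) := by
      unfold l1
      rw [← Finset.sum_add_distrib]
      apply Finset.sum_le_sum
      intro s _
      have : d s - d' s = (vmul d P s - vmul d' P s) + (vmul d' P s - vmul d' P' s) := by
        rw [hstat, hstat']; ring
      simp only []
      rw [this]
      exact abs_add_le _ _
    exact h1.trans (add_le_add (hc d d' hd hd') hkey)
  have hpos : 0 < 1 - γ := by linarith
  rw [le_div_iff₀ hpos]
  nlinarith [hmain]
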